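/- GHZ₂ degenerates to W: for every ε ≠ 0, letting m(ε) : ℂ² → ℂ² be the linear map sending e₀ ↦ ε^{-1}((e₀ + ε e₁)) and e₁ ↦ ε^{-1}(−e₀) applied in the first factor and m'(ε) sending e₀ ↦ e₀ + ε e₁, e₁ ↦ −e₀ in the second and third factors, the tensor (m(ε)⊗m'(ε)⊗m'(ε))(GHZ₂) converges to W as ε → 0. -/

import Mathlib

open scoped BigOperators

/-- A 3-tensor in `ℂ^a ⊗ ℂ^b ⊗ ℂ^c`, given by its coordinates. -/
abbrev T3 (a b c : ℕ) : Type := Fin a → Fin b → Fin c → ℂ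

/-- Restriction of 3-tensors: `t ≥ t'` iff `t' = (m₁ ⊗ m₂ ⊗ m₃) t`. -/
def res3 {a b c a' b' c' : ℕ} (t : T3 a b c) (t' : T3 a' b' c') : Prop :=
  ∃ (m₁ : Fin a' → Fin a → ℂ) (m₂ : Fin b' → Fin b → ℂ) (m₃ : Fin c' → Fin c → ℂ),
    ∀ i j k, t' i j k = ∑ p, ∑ q, ∑ r, m₁ i p * m₂ j q * m₃ k r * t p q r

/-- The W-state `e₀⊗e₀⊗e₁ + e₀⊗e₁⊗e₀ + e₁⊗e₀⊗e₀`. -/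
def W : T3 2 2 2 := fun i j k => if (i : ℕ) + (j : ℕ) + (k : ℕ) = 1 then 1 else 0

/-- The GHZ state `e₀⊗e₀⊗e₀ + e₁⊗e₁⊗e₁`. -/
def GHZ2 : T3 2 2 2 := fun i j k => if i = j ∧ j = k then 1 else 0

/-- The unit tensor `GHZ_r = Σ_i e_i⊗e_i⊗e_i`. -/
def GHZ (r : ℕ) : T3 r r r := fun i j k => if i = j ∧ j = k then 1 else 0

/-- The matrix `m(ε)` sending `e₀ ↦ ε⁻¹(e₀ + ε e₁)` and `e₁ ↦ ε⁻¹(-e₀)`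
(entry `(i,p)` is the `i`-th coordinate of the image of `e_p`). -/
noncomputable def mA (ε : ℂ) : Fin 2 → Fin 2 → ℂ := fun i p =>
  if p = 0 then (if i = 0 then ε⁻¹ else 1) else (if i = 0 then -ε⁻¹ else 0)

/-- The matrix `m'(ε)` sending `e₀ ↦ e₀ + ε e₁` and `e₁ ↦ -e₀`. -/
def mB (ε : ℂ) : Fin 2 → Fin 2 → ℂ := fun i p =>
  if p = 0 then (if i = 0 then 1 else ε) else (if i = 0 then -1 else 0)

/-- `(m(ε) ⊗ m'(ε) ⊗ m'(ε)) GHZ₂` converges to `W` as `ε → 0` (`ε ≠ 0`),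
so GHZ₂ degenerates to W. -/
theorem GHZ2_degenerates_to_W :
    Filter.Tendsto
      (fun ε : ℂ => (fun i j k =>
          ∑ p, ∑ q, ∑ r, mA ε i p * mB ε j q * mB ε k r * GHZ2 p q r : T3 2 2 2))
      (nhdsWithin 0 {0}ᶜ) (nhds W) := by
  have hcongr : (fun ε : ℂ => (fun i j k =>
          ∑ p, ∑ q, ∑ r, mA ε i p * mB ε j q * mB ε k r * GHZ2 p q r : T3 2 2 2))
      =ᶠ[nhdsWithin 0 {0}ᶜ]
      (fun ε : ℂ => (fun i j k =>
        if (i : ℕ) + (j : ℕ) + (k : ℕ) = 1 then 1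
        else if (i : ℕ) + (j : ℕ) + (k : ℕ) = 2 then ε
        else if (i : ℕ) + (j : ℕ) + (k : ℕ) = 3 then ε ^ 2 else 0 : T3 2 2 2)) := by
    filter_upwards [self_mem_nhdsWithin] with ε (hε : ε ≠ 0)
    funext i j k
    fin_cases i <;> fin_cases j <;> fin_cases k <;>
      simp [Fin.sum_univ_two, mA, mB, GHZ2] <;> (try field_simp) <;> (try ring)
  refine Filter.Tendsto.congr' hcongr.symm ?_
  rw [tendsto_pi_nhds]
  intro i
  rw [tendsto_pi_nhds]
  intro j
  rw [tendsto_pi_nhds]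
  intro k
  have : Filter.Tendsto (fun ε : ℂ =>
      (if (i : ℕ) + (j : ℕ) + (k : ℕ) = 1 then 1
        else if (i : ℕ) + (j : ℕ) + (k : ℕ) = 2 then ε
        else if (i : ℕ) + (j : ℕ) + (k : ℕ) = 3 then ε ^ 2 else 0 : ℂ))
      (nhds 0) (nhds (W i j k)) := by
    fin_cases i <;> fin_cases j <;> fin_cases k <;>
      simp [W] <;>
      first
        | exact tendsto_const_nhds
        | exact Filter.tendsto_id
        | simpa using ((continuous_pow 2).tendsto (0 : ℂ))
  exact this.mono_left nhdsWithin_le_nhds
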